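/- Let n ≥ 5 and let n_1, n_2, ..., n_k be positive integers each at least 5 with n_1 + ... + n_k = n. Then the set {1,...,n} can be partitioned into sets V_1, ..., V_k with |V_i| = n_i such that each V_i carries a cycle all of whose edges have prime difference (i.e., the prime difference graph G_n admits a 2-factor with cycle lengths n_1, ..., n_k). -/

import Mathlib

/-- The finite set `V ⊆ ℤ` carries a cycle all of whose edges have prime difference. -/
def HasPrimeDiffCycle (V : Finset ℤ) : Prop :=
  ∃ c : ℕ → ℤ, Set.BijOn c (Set.Ico 0 V.card) ↑V ∧
    (∀ i, i + 1 < V.card → ((c i - c (i + 1)).natAbs).Prime) ∧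
    ((c (V.card - 1) - c 0).natAbs).Prime


def PD (x y : ℤ) : Prop := ((x - y).natAbs).Prime

lemma PD.symm' {x y : ℤ} (h : PD x y) : PD y x := by
  unfold PD at *; rwa [show y - x = -(x-y) by ring, Int.natAbs_neg]

lemma pd' (x y : ℤ)
    (h : x - y = 2 ∨ x - y = -2 ∨ x - y = 3 ∨ x - y = -3 ∨ x - y = 5 ∨ x - y = -5 ∨
      x - y = 7 ∨ x - y = -7) : PD x y := by
  unfold PD
  rcases h with h|h|h|h|h|h|h|h <;> rw [h] <;> norm_num

def GoodList (a : ℤ) (m : ℕ) (l : List ℤ) : Prop :=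
  l.length = m ∧ l.Nodup ∧ (∀ x, x ∈ l ↔ (a + 1 ≤ x ∧ x ≤ a + m)) ∧
  l.Chain' PD ∧ l.head? = some (a + 3) ∧ l.getLast? = some (a + 1) ∧
  ∃ P Q, l = P ++ [a + m - 2, a + m] ++ Q ∨ l = P ++ [a + m, a + m - 2] ++ Q

lemma good_base5 (a : ℤ) : GoodList a 5 [a+3, a+5, a+2, a+4, a+1] := by
  refine ⟨rfl, by simp <;> omega, by intro x; simp; omega, ?_, rfl, rfl,
    [], [a+2,a+4,a+1], by left; push_cast; norm_num <;> omega⟩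
  simp only [List.Chain', List.isChain_cons_cons, List.isChain_singleton, and_true]
  repeat' apply And.intro
  all_goals exact pd' _ _ (by omega)

lemma good_base6 (a : ℤ) : GoodList a 6 [a+3, a+5, a+2, a+4, a+6, a+1] := by
  refine ⟨rfl, by simp <;> omega, by intro x; simp; omega, ?_, rfl, rfl,
    [a+3,a+5,a+2], [a+1], by left; push_cast; norm_num <;> omega⟩
  simp only [List.Chain', List.isChain_cons_cons, List.isChain_singleton, and_true]
  repeat' apply And.intro
  all_goals exact pd' _ _ (by omega)

lemma good_base7 (a : ℤ) : GoodList a 7 [a+3, a+5, a+7, a+2, a+4, a+6, a+1] := by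
  refine ⟨rfl, by simp <;> omega, by intro x; simp; omega, ?_, rfl, rfl,
    [a+3], [a+2,a+4,a+6,a+1], by left; push_cast; norm_num <;> omega⟩
  simp only [List.Chain', List.isChain_cons_cons, List.isChain_singleton, and_true]
  repeat' apply And.intro
  all_goals exact pd' _ _ (by omega)

lemma good_base8 (a : ℤ) : GoodList a 8 [a+3, a+5, a+7, a+2, a+4, a+6, a+8, a+1] := by
  refine ⟨rfl, by simp <;> omega, by intro x; simp; omega, ?_, rfl, rfl,
    [a+3,a+5,a+7,a+2,a+4], [a+1], by left; push_cast; norm_num <;> omega⟩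
  simp only [List.Chain', List.isChain_cons_cons, List.isChain_singleton, and_true]
  repeat' apply And.intro
  all_goals exact pd' _ _ (by omega)

lemma good_base9 (a : ℤ) : GoodList a 9 [a+3, a+5, a+7, a+9, a+2, a+4, a+6, a+8, a+1] := by
  refine ⟨rfl, by simp <;> omega, by intro x; simp; omega, ?_, rfl, rfl,
    [a+3,a+5], [a+2,a+4,a+6,a+8,a+1], by left; push_cast; norm_num <;> omega⟩
  simp only [List.Chain', List.isChain_cons_cons, List.isChain_singleton, and_true]
  repeat' apply And.intro
  all_goals exact pd' _ _ (by omega)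

lemma good_step (a : ℤ) (m : ℕ) (hm : 10 ≤ m) (l2 : List ℤ)
    (h2 : GoodList (a + 5) (m - 5) l2) :
    GoodList a m ((a+3) :: (l2.reverse ++ [a+5, a+2, a+4, a+1])) := by
  obtain ⟨len2, nd2, mem2, chain2, head2, last2, P2, Q2, pair2⟩ := h2
  have hc : ((m - 5 : ℕ) : ℤ) = (m : ℤ) - 5 := by push_cast [Nat.cast_sub (by omega : 5 ≤ m)]; ring
  have mem2' : ∀ x, x ∈ l2 ↔ (a + 6 ≤ x ∧ x ≤ a + m) := by
    intro x; rw [mem2 x, hc]; constructor <;> intro ⟨h1, h2⟩ <;> omega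
  have memt : ∀ x, x ∈ l2.reverse ↔ (a + 6 ≤ x ∧ x ≤ a + m) := by
    intro x; rw [List.mem_reverse]; exact mem2' x
  have hne : l2 ≠ [] := by intro h; rw [h] at len2; simp at len2; omega
  refine ⟨?_, ?_, ?_, ?_, rfl, ?_, ?_⟩
  · simp [len2]; omega
  · refine List.nodup_cons.2 ⟨?_, List.nodup_append.2 ⟨List.nodup_reverse.2 nd2, by simp <;> omega, ?_⟩⟩
    · intro hx
      rcases List.mem_append.1 hx with h | h
      · rw [memt] at h; omega
      · simp at h
    · intro x hx y hx'
      rw [memt] at hx; simp at hx'; omega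
  · intro x
    simp only [List.mem_cons, List.mem_append, memt]
    simp; omega
  · have ct : l2.reverse.Chain' PD :=
      List.isChain_reverse.2 (chain2.imp (fun _ _ h => h.symm'))
    have csuf : List.Chain' PD [a+5, a+2, a+4, a+1] := by
      simp only [List.Chain', List.isChain_cons_cons, List.isChain_singleton, and_true]
      exact ⟨pd' _ _ (by omega), pd' _ _ (by omega), pd' _ _ (by omega)⟩
    have cts : List.Chain' PD (l2.reverse ++ [a+5, a+2, a+4, a+1]) := by
      refine ct.append csuf ?_
      intro x hx y hy
      rw [List.getLast?_reverse, head2] at hx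
      simp at hx hy
      subst hx; subst hy
      exact pd' _ _ (by omega)
    refine List.isChain_cons.2 ⟨?_, cts⟩
    intro y hy
    rw [List.head?_append, List.head?_reverse, last2] at hy
    simp at hy
    subst hy
    exact pd' _ _ (by omega)
  · rw [show (a+3) :: (l2.reverse ++ [a+5, a+2, a+4, a+1]) =
      ((a+3) :: (l2.reverse ++ [a+5, a+2, a+4])) ++ [a+1] by simp, List.getLast?_concat]
  · have e1 : a + 5 + ((m - 5 : ℕ) : ℤ) - 2 = a + m - 2 := by omega
    have e2 : a + 5 + ((m - 5 : ℕ) : ℤ) = a + m := by omega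
    rw [e1, e2] at pair2
    rcases pair2 with h | h
    · refine ⟨(a+3) :: Q2.reverse, P2.reverse ++ [a+5, a+2, a+4, a+1], Or.inr ?_⟩
      rw [h]; simp
    · refine ⟨(a+3) :: Q2.reverse, P2.reverse ++ [a+5, a+2, a+4, a+1], Or.inl ?_⟩
      rw [h]; simp

lemma good_exists : ∀ m, 5 ≤ m → ∀ a : ℤ, ∃ l, GoodList a m l := by
  intro m
  induction m using Nat.strong_induction_on with
  | _ m ih =>
    intro hm a
    by_cases h : m ≤ 9
    · interval_cases m
      exacts [⟨_, good_base5 a⟩, ⟨_, good_base6 a⟩, ⟨_, good_base7 a⟩,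
        ⟨_, good_base8 a⟩, ⟨_, good_base9 a⟩]
    · obtain ⟨l2, h2⟩ := ih (m - 5) (by omega) (by omega) (a + 5)
      exact ⟨_, good_step a m (by omega) l2 h2⟩

lemma card_Icc_int (a : ℤ) (m : ℕ) : (Finset.Icc (a+1) (a+(m:ℤ))).card = m := by
  rw [Int.card_Icc]; omega

lemma hasCycle_of_good (a : ℤ) (m : ℕ) (hm : 5 ≤ m) (l : List ℤ) (h : GoodList a m l) :
    HasPrimeDiffCycle (Finset.Icc (a+1) (a+(m:ℤ))) := by
  obtain ⟨len, nd, mem, chain, hhead, hlast, -⟩ := h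
  have hcard := card_Icc_int a m
  have hlen : l.length = m := len
  refine ⟨fun i => l.getD i 0, ?_, ?_, ?_⟩
  · rw [hcard]
    refine ⟨?_, ?_, ?_⟩
    · intro i hi
      simp only [Set.mem_Ico] at hi
      have hi' : i < l.length := by omega
      beta_reduce
      rw [List.getD_eq_getElem l 0 hi']
      have hmem := (mem _).1 (l.getElem_mem hi')
      simp only [Finset.coe_Icc, Set.mem_Icc]
      exact hmem
    · intro i hi j hj he
      simp only [Set.mem_Ico] at hi hj
      beta_reduce at he
      rw [List.getD_eq_getElem l 0 (n := i) (by omega), List.getD_eq_getElem l 0 (n := j) (by omega)] at he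
      exact (List.Nodup.getElem_inj_iff nd).1 he
    · intro x hx
      rw [Finset.coe_Icc, Set.mem_Icc] at hx
      obtain ⟨i, hi, he⟩ := List.mem_iff_getElem.1 ((mem x).2 hx)
      refine ⟨i, by simp only [Set.mem_Ico]; omega, ?_⟩
      beta_reduce
      rw [List.getD_eq_getElem l 0 hi]; exact he
  · intro i hi
    rw [hcard] at hi
    have h1 : i < l.length - 1 := by omega
    have hpd := List.isChain_iff_getElem.1 chain i (by omega)
    beta_reduce
    rw [List.getD_eq_getElem l 0 (by omega), List.getD_eq_getElem l 0 (by omega)]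
    exact hpd
  · rw [hcard]
    have h0 : 0 < l.length := by omega
    have hm1 : m - 1 < l.length := by omega
    beta_reduce
    rw [List.getD_eq_getElem l 0 hm1, List.getD_eq_getElem l 0 h0]
    have e0 : l[0] = a + 3 := by
      rw [List.head?_eq_getElem?, List.getElem?_eq_getElem h0] at hhead
      exact Option.some_injective _ hhead
    have e1 : l[m-1] = a + 1 := by
      rw [List.getLast?_eq_getElem?, len, List.getElem?_eq_getElem (by omega : m - 1 < l.length)] at hlast
      exact Option.some_injective _ hlast
    rw [e0, e1, show a + 1 - (a+3) = -2 by ring]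
    norm_num

lemma hasCycle_Icc (a : ℤ) (m : ℕ) (hm : 5 ≤ m) :
    HasPrimeDiffCycle (Finset.Icc (a+1) (a+(m:ℤ))) := by
  obtain ⟨l, hl⟩ := good_exists m hm a
  exact hasCycle_of_good a m hm l hl

lemma aux : ∀ (k : ℕ) (ns : Fin k → ℕ), (∀ i, 5 ≤ ns i) → ∀ a : ℤ,
    ∃ V : Fin k → Finset ℤ,
      (∀ i j, i ≠ j → Disjoint (V i) (V j)) ∧
      (Finset.univ.biUnion V = Finset.Icc (a+1) (a + (∑ i, ns i : ℕ))) ∧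
      (∀ i, (V i).card = ns i) ∧
      (∀ i, HasPrimeDiffCycle (V i)) := by
  intro k
  induction k with
  | zero =>
    intro ns hns a
    refine ⟨Fin.elim0, fun i => i.elim0, ?_, fun i => i.elim0, fun i => i.elim0⟩
    rw [Finset.univ_eq_empty, Finset.biUnion_empty]
    symm
    rw [Finset.Icc_eq_empty_iff]
    rw [Finset.sum_empty]
    push_cast
    omega
  | succ k ih =>
    intro ns hns a
    obtain ⟨V', hdisj', hunion', hcard', hcyc'⟩ :=
      ih (fun i => ns i.succ) (fun i : Fin k => hns i.succ) (a + ns 0)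
    set V : Fin (k+1) → Finset ℤ :=
      Fin.cases (Finset.Icc (a+1) (a + (ns 0 : ℤ))) V' with hV
    have hV0 : V 0 = Finset.Icc (a+1) (a + (ns 0 : ℤ)) := rfl
    have hVs : ∀ i : Fin k, V i.succ = V' i := fun i => rfl
    have hsub : ∀ i : Fin k, V' i ⊆ Finset.Icc (a + (ns 0 : ℤ) + 1) (a + ns 0 + (∑ i : Fin k, ns i.succ : ℕ)) := by
      intro i
      rw [← hunion']
      exact Finset.subset_biUnion_of_mem V' (Finset.mem_univ i)
    refine ⟨V, ?_, ?_, ?_, ?_⟩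
    · intro i j hij
      induction i using Fin.cases with
      | zero =>
        induction j using Fin.cases with
        | zero => exact absurd rfl hij
        | succ j =>
          rw [hV0, hVs]
          refine Finset.disjoint_left.2 ?_
          intro x hx hx'
          have h2 := hsub j hx'
          rw [Finset.mem_Icc] at hx h2
          omega
      | succ i =>
        induction j using Fin.cases with
        | zero =>
          rw [hV0, hVs]
          refine Finset.disjoint_left.2 ?_
          intro x hx hx'
          have h2 := hsub i hx
          rw [Finset.mem_Icc] at hx' h2
          omega
        | succ j =>
          exact hdisj' i j (fun h => hij (by rw [h]))
    · ext x
      rw [Finset.mem_biUnion]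
      constructor
      · rintro ⟨i, -, hx⟩
        induction i using Fin.cases with
        | zero =>
          rw [hV0, Finset.mem_Icc] at hx
          rw [Finset.mem_Icc, Fin.sum_univ_succ]
          have hpos : (0:ℤ) ≤ ∑ x : Fin k, (ns x.succ : ℤ) := by positivity
          push_cast
          omega
        | succ i =>
          rw [hVs] at hx
          have h2 := hsub i hx
          rw [Finset.mem_Icc] at h2
          rw [Finset.mem_Icc, Fin.sum_univ_succ]
          push_cast at h2 ⊢
          omega
      · intro hx
        rw [Finset.mem_Icc, Fin.sum_univ_succ] at hx
        push_cast at hx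
        by_cases hx0 : x ≤ a + ns 0
        · exact ⟨0, Finset.mem_univ _, by rw [hV0, Finset.mem_Icc]; exact ⟨hx.1, hx0⟩⟩
        · have : x ∈ Finset.univ.biUnion V' := by
            rw [hunion', Finset.mem_Icc]
            push_cast
            omega
          obtain ⟨i, -, hi⟩ := Finset.mem_biUnion.1 this
          exact ⟨i.succ, Finset.mem_univ _, by rw [hVs]; exact hi⟩
    · intro i
      induction i using Fin.cases with
      | zero => rw [hV0, card_Icc_int]
      | succ i => rw [hVs]; exact hcard' i
    · intro i
      induction i using Fin.cases with
      | zero => rw [hV0]; exact hasCycle_Icc a (ns 0) (hns 0)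
      | succ i => rw [hVs]; exact hcyc' i

/-- `G_n` admits a 2-factor with prescribed cycle lengths, each at least 5. -/
theorem prime_diff_two_factor_lengths_ge_five (n k : ℕ) (hn : 5 ≤ n)
    (ns : Fin k → ℕ) (hns : ∀ i, 5 ≤ ns i) (hsum : ∑ i, ns i = n) :
    ∃ V : Fin k → Finset ℤ,
      (∀ i j, i ≠ j → Disjoint (V i) (V j)) ∧
      (Finset.univ.biUnion V = Finset.Icc (1 : ℤ) n) ∧
      (∀ i, (V i).card = ns i) ∧
      (∀ i, HasPrimeDiffCycle (V i)) := by
  obtain ⟨V, h1, h2, h3, h4⟩ := aux k ns hns 0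
  refine ⟨V, h1, ?_, h3, h4⟩
  rw [h2, hsum]
  norm_num
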